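/- arXiv:1411.5986 — 2 statements merged into one kernel-verified Lean document; each statement's English description precedes it below -/
import Mathlib

section
/- Let T be a real 3×3 matrix and define the correlation function E_T(m,n) = m · (T n) for unit vectors m, n ∈ ℝ³. If E_T admits an LHS (non-steering) model, then sup_{m,n unit vectors} m · (T n) ≥ (2/3) · Σ_{i,j=1}^3 T_{ij}². Equivalently, if the largest singular value T₁ of T satisfies T₁ < (2/3) Σ_{i,j} T_{ij}², then E_T admits no LHS model (the underlying state is steerable). -/
open MeasureTheory

noncomputable section

/-- `ℝ³` with the Euclidean norm. -/
abbrev V3 : Type := EuclideanSpace ℝ (Fin 3)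

/-- The unit sphere `S² ⊂ ℝ³` (as a subtype). -/
abbrev Sph : Type := Metric.sphere (0 : V3) 1

/-- The rotation-invariant surface measure `dΩ` on the unit sphere `S² ⊂ ℝ³`,
with total measure `4π`. -/
def dOmega : Measure Sph := (volume : Measure V3).toSphere

/-- Euclidean dot product on `ℝ³`. -/
def dot (x y : V3) : ℝ := ∑ i, x i * y i

/-- The bilinear form `m · T n = ∑ᵢⱼ Tᵢⱼ mᵢ nⱼ` associated to a real `3×3` matrix `T`. -/
def bilin (T : Matrix (Fin 3) (Fin 3) ℝ) (m n : V3) : ℝ := ∑ i, ∑ j, T i j * m i * n j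

/-- A local-hidden-state (LHS, non-steering) model for a correlation function `E` on `S²×S²`:
a finite index set, probabilities `p λ ≥ 0` summing to `1`, measurable response functions
`I(·,λ) : S² → [-1,1]`, and unit (Bloch) vectors `λ⃗_λ ∈ ℝ³` reproducing
`E(m,n) = ∑_λ p_λ I(m,λ) (n · λ⃗_λ)` for all unit vectors `m, n`. -/
def HasLHSModel (E : V3 → V3 → ℝ) : Prop :=
  ∃ (N : ℕ) (p : Fin N → ℝ) (I : Fin N → Sph → ℝ) (lam : Fin N → V3),
    (∀ l, 0 ≤ p l) ∧ (∑ l, p l) = 1 ∧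
    (∀ l, Measurable (I l)) ∧
    (∀ l m, |I l m| ≤ 1) ∧
    (∀ l, ‖lam l‖ = 1) ∧
    (∀ m n : Sph, E m n = ∑ l, p l * I l m * dot n (lam l))

/-- The largest singular value of `T`, i.e. the supremum of `m · T n` over unit vectors. -/
def maxSingularValue (T : Matrix (Fin 3) (Fin 3) ℝ) : ℝ :=
  sSup {x : ℝ | ∃ m n : V3, ‖m‖ = 1 ∧ ‖n‖ = 1 ∧ x = bilin T m n}

open Set Metric Real

instance : IsFiniteMeasure dOmega := by unfold dOmega; infer_instance

lemma finrank_V3 : Module.finrank ℝ V3 = 3 := by simp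

/-- Polar coordinates for `V3`. -/
lemma polar (f : V3 → ℝ) (g : Sph → ℝ) (h : ℝ → ℝ)
    (hf : ∀ (x : V3) (hx : x ≠ 0), f x
      = g ⟨‖x‖⁻¹ • x, by
          rw [mem_sphere_zero_iff_norm, norm_smul, norm_inv, norm_norm,
            inv_mul_cancel₀ (norm_ne_zero_iff.2 hx)]⟩ * h ‖x‖) :
    ∫ x : V3, f x = (∫ s, g s ∂dOmega) * ∫ r in Ioi (0:ℝ), r ^ 2 * h r := by
  have h1 : ∫ x : V3, f x = ∫ x : ({0}ᶜ : Set V3), f x ∂(volume.comap Subtype.val) := by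
    rw [integral_subtype_comap (measurableSet_singleton (0:V3)).compl f,
      MeasureTheory.restrict_compl_singleton]
  have h2 : ∀ x : ({0}ᶜ : Set V3), f x.1
      = (fun p : Sph × Ioi (0:ℝ) => g p.1 * h p.2) (homeomorphUnitSphereProd V3 x) := by
    intro x
    rw [hf x.1 x.2]
    show g _ * h _ = g (homeomorphUnitSphereProd V3 x).1 * h (homeomorphUnitSphereProd V3 x).2
    congr 2
    · ext1; simp [homeomorphUnitSphereProd]
    · simp [homeomorphUnitSphereProd]
  have h3 := (volume : Measure V3).measurePreserving_homeomorphUnitSphereProd.integral_comp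
    (Homeomorph.measurableEmbedding _) (fun p : Sph × Ioi (0:ℝ) => g p.1 * h p.2)
  rw [h1]
  rw [show (fun x : ({0}ᶜ : Set V3) => f x.1)
      = fun x : ({0}ᶜ : Set V3) =>
        (fun p : Sph × Ioi (0:ℝ) => g p.1 * h p.2) (homeomorphUnitSphereProd V3 x)
    from funext h2]
  rw [h3, finrank_V3]
  rw [MeasureTheory.integral_prod_mul (μ := (volume : Measure V3).toSphere)
    (ν := Measure.volumeIoiPow (3-1)) g (fun r : Ioi (0:ℝ) => h r)]
  congr 1
  show ∫ r : Ioi (0:ℝ), h r ∂(Measure.volumeIoiPow 2) = _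
  simp only [Measure.volumeIoiPow, ENNReal.ofReal]
  rw [integral_withDensity_eq_integral_smul
      ((measurable_subtype_coe.pow_const _).real_toNNReal),
    integral_subtype_comap measurableSet_Ioi (fun a => Real.toNNReal (a ^ 2) • h a),
    setIntegral_congr_fun measurableSet_Ioi (g := fun r => r ^ 2 * h r) (fun x hx => ?_)]
  rw [NNReal.smul_def, Real.coe_toNNReal _ (pow_nonneg hx.out.le _), smul_eq_mul]


noncomputable section


/-- Fubini on `V3` for products of coordinate functions. -/
lemma gauss_pi (φ : Fin 3 → ℝ → ℝ) :
    ∫ x : V3, ∏ j, φ j (x j) = ∏ j, ∫ t : ℝ, φ j t := by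
  rw [← ((EuclideanSpace.volume_preserving_symm_measurableEquiv_toLp (Fin 3)).symm).integral_comp
      (MeasurableEquiv.measurableEmbedding _) (fun x : V3 => ∏ j, φ j (x j))]
  exact MeasureTheory.integral_fintype_prod_eq_prod φ

lemma norm_sq_V3 (x : V3) : ‖x‖ ^ 2 = ∑ j, (x j) ^ 2 := by
  rw [EuclideanSpace.norm_eq, sq_sqrt (Finset.sum_nonneg fun j _ => sq_nonneg _)]
  simp [Real.norm_eq_abs, sq_abs]

lemma int_exp : ∫ t : ℝ, exp (-t ^ 2) = sqrt π := by
  simpa using integral_gaussian 1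

lemma int_odd : ∫ t : ℝ, t * exp (-t ^ 2) = 0 := by
  have h := MeasureTheory.integral_neg_eq_self (fun t : ℝ => t * exp (-t ^ 2)) volume
  simp only [neg_sq, neg_mul] at h
  rw [MeasureTheory.integral_neg] at h
  linarith

lemma Ioi_moment (n : ℕ) : ∫ r in Ioi (0:ℝ), r ^ n * exp (-r ^ 2)
    = (1/2) * Real.Gamma ((n + 1) / 2) := by
  rw [← integral_rpow_mul_exp_neg_rpow two_pos (by exact_mod_cast neg_one_lt_zero.trans_le n.cast_nonneg : (-1:ℝ) < n)]
  refine setIntegral_congr_fun measurableSet_Ioi (fun x hx => ?_)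
  rw [show ((n:ℝ)) = ((n:ℕ):ℝ) from rfl, Real.rpow_natCast,
    show ((2:ℝ)) = ((2:ℕ):ℝ) by norm_num, Real.rpow_natCast]

lemma int_sq : ∫ t : ℝ, t ^ 2 * exp (-t ^ 2) = sqrt π / 2 := by
  have h := integral_comp_abs (f := fun r : ℝ => r ^ 2 * exp (-r ^ 2))
  simp only [sq_abs] at h
  rw [h, Ioi_moment 2]
  rw [show ((2:ℕ) + 1 : ℝ) / 2 = 1/2 + 1 by norm_num, Real.Gamma_add_one (by norm_num),
    Real.Gamma_one_half_eq]
  ring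

lemma int_abs : ∫ t : ℝ, |t| * exp (-t ^ 2) = 1 := by
  have h := integral_comp_abs (f := fun r : ℝ => r * exp (-r ^ 2))
  simp only [sq_abs] at h
  simp_rw [show (fun x:ℝ => x * exp (-x^2)) = fun x:ℝ => x ^ 1 * exp (-x^2) by funext x; ring] at h
  rw [h, Ioi_moment 1]
  rw [show ((1:ℕ) + 1 : ℝ) / 2 = 1 by norm_num, Real.Gamma_one]
  norm_num

lemma radial2 : ∫ r in Ioi (0:ℝ), r ^ 2 * (r ^ 2 * exp (-r ^ 2)) = 3 * sqrt π / 8 := by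
  have : ∀ r : ℝ, r ^ 2 * (r ^ 2 * exp (-r ^ 2)) = r ^ 4 * exp (-r ^ 2) := fun r => by ring
  simp_rw [this]
  rw [Ioi_moment 4, show ((4:ℕ) + 1 : ℝ) / 2 = 3/2 + 1 by norm_num,
    Real.Gamma_add_one (by norm_num), show (3/2 : ℝ) = 1/2 + 1 by norm_num,
    Real.Gamma_add_one (by norm_num), Real.Gamma_one_half_eq]
  ring

lemma radial1 : ∫ r in Ioi (0:ℝ), r ^ 2 * (r * exp (-r ^ 2)) = 1 / 2 := by
  have : ∀ r : ℝ, r ^ 2 * (r * exp (-r ^ 2)) = r ^ 3 * exp (-r ^ 2) := fun r => by ring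
  simp_rw [this]
  rw [Ioi_moment 3, show ((3:ℕ) + 1 : ℝ) / 2 = 1 + 1 by norm_num,
    Real.Gamma_add_one (by norm_num), Real.Gamma_one]
  norm_num


lemma sqrtpi_pos : 0 < sqrt π := Real.sqrt_pos.2 pi_pos
lemma sqrtpi_sq : sqrt π * sqrt π = π := Real.mul_self_sqrt pi_pos.le

/-- The second moments of the sphere measure. -/
lemma integral_sphere_mul (i k : Fin 3) :
    ∫ m : Sph, ((m : V3) i * (m : V3) k) ∂dOmega = if i = k then 4 * π / 3 else 0 := by
  have hp := polar (fun x : V3 => x i * x k * exp (-‖x‖ ^ 2))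
    (fun m : Sph => (m : V3) i * (m : V3) k) (fun r => r ^ 2 * exp (-r ^ 2)) (by
      intro x hx
      have hn : ‖x‖ ≠ 0 := norm_ne_zero_iff.2 hx
      simp only [PiLp.smul_apply, smul_eq_mul]
      field_simp)
  have hprod : (fun x : V3 => x i * x k * exp (-‖x‖ ^ 2))
      = fun x : V3 => ∏ j, ((if j = i then x j else 1) *
          ((if j = k then x j else 1) * exp (-(x j) ^ 2))) := by
    funext x
    rw [norm_sq_V3]
    simp only [Finset.prod_mul_distrib, Finset.prod_ite_eq', Finset.mem_univ, if_true,
      ← Real.exp_sum, Finset.sum_neg_distrib]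
    ring
  rw [hprod] at hp
  rw [show (fun x : V3 => ∏ j, ((if j = i then x j else 1) *
        ((if j = k then x j else 1) * exp (-(x j) ^ 2))))
      = fun x : V3 => ∏ j, (fun t : ℝ => (if j = i then t else 1) *
        ((if j = k then t else 1) * exp (-t ^ 2))) (x j) from rfl] at hp
  rw [gauss_pi (fun j t => (if j = i then t else 1) * ((if j = k then t else 1) * exp (-t ^ 2)))] at hp
  rw [radial2] at hp
  by_cases hik : i = k
  · subst hik
    have hval : ∀ j : Fin 3, (∫ t : ℝ, (if j = i then t else 1) *
        ((if j = i then t else 1) * exp (-t ^ 2))) = if j = i then sqrt π / 2 else sqrt π := by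
      intro j
      by_cases hj : j = i
      · simp only [hj, if_true, if_pos]
        simp_rw [show ∀ t : ℝ, t * (t * exp (-t ^ 2)) = t ^ 2 * exp (-t ^ 2) from fun t => by ring]
        rw [int_sq]
      · simp only [hj, if_false, one_mul]
        exact int_exp
    simp_rw [hval] at hp
    rw [if_pos rfl]
    have h38 : (3 * sqrt π / 8 : ℝ) ≠ 0 := by positivity
    refine mul_right_cancel₀ h38 ?_
    rw [← hp, Fin.prod_univ_three]
    fin_cases i <;> simp <;> nlinarith [sqrtpi_sq, sqrtpi_pos]
  · have hzero : (∫ t : ℝ, (if i = i then t else 1) *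
        ((if i = k then t else 1) * exp (-t ^ 2))) = 0 := by
      simp only [if_pos rfl, if_neg hik, one_mul]
      simpa using int_odd
    rw [if_neg hik]
    have h38 : (3 * sqrt π / 8 : ℝ) ≠ 0 := by positivity
    refine mul_right_cancel₀ h38 ?_
    rw [← hp, zero_mul]
    exact Finset.prod_eq_zero (Finset.mem_univ i) hzero

lemma dot_eq_inner (x y : V3) : dot x y = inner ℝ x y := by
  simp [dot, PiLp.inner_apply, RCLike.inner_apply, mul_comm]

lemma dot_smul_left (c : ℝ) (x y : V3) : dot (c • x) y = c * dot x y := by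
  simp [dot, PiLp.smul_apply, smul_eq_mul, Finset.mul_sum, mul_assoc]

/-- The Gaussian integral `∫ |y 0| e^{-‖y‖²}` on `V3` equals `π`. -/
lemma gauss_abs_coord : ∫ y : V3, |y 0| * exp (-‖y‖ ^ 2) = π := by
  have hprod : (fun y : V3 => |y 0| * exp (-‖y‖ ^ 2))
      = fun y : V3 => ∏ j, (fun t : ℝ => (if j = 0 then |t| else 1) * exp (-t ^ 2)) (y j) := by
    funext y
    rw [norm_sq_V3]
    simp only [Finset.prod_mul_distrib, Finset.prod_ite_eq', Finset.mem_univ, if_true,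
      ← Real.exp_sum, Finset.sum_neg_distrib]
  rw [hprod, gauss_pi (fun j t => (if j = 0 then |t| else 1) * exp (-t ^ 2))]
  have hval : ∀ j : Fin 3, (∫ t : ℝ, (if j = 0 then |t| else 1) * exp (-t ^ 2))
      = if j = 0 then 1 else sqrt π := by
    intro j
    by_cases hj : j = 0
    · simp only [hj, if_true, if_pos]
      exact int_abs
    · simp only [hj, if_false, one_mul]
      exact int_exp
  simp_rw [hval]
  rw [Fin.prod_univ_three]
  norm_num [show (1:Fin 3) ≠ 0 by decide, show (2:Fin 3) ≠ 0 by decide, sqrtpi_sq]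

/-- The sphere integral of `|dot m v|` equals `2π ‖v‖`. -/
lemma integral_sphere_abs_dot (v : V3) :
    ∫ m : Sph, |dot (m : V3) v| ∂dOmega = 2 * π * ‖v‖ := by
  by_cases hv : v = 0
  · simp [hv, dot]
  have hnv : ‖v‖ ≠ 0 := norm_ne_zero_iff.2 hv
  set u : V3 := ‖v‖⁻¹ • v with hu_def
  have hu : ‖u‖ = 1 := by
    rw [hu_def, norm_smul, norm_inv, norm_norm, inv_mul_cancel₀ hnv]
  -- orthonormal basis with b 0 = u
  have hcard : Module.finrank ℝ V3 = Fintype.card (Fin 3) := by simp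
  have horth : Orthonormal ℝ (Set.restrict {0} (fun _ : Fin 3 => u)) := by
    rw [orthonormal_iff_ite]
    intro i j
    have hij : i = j := Subtype.ext (by
      have h1 := i.2; have h2 := j.2
      simp only [Set.mem_singleton_iff] at h1 h2
      rw [h1, h2])
    subst hij
    rw [if_pos rfl]
    change inner ℝ u u = 1
    rw [real_inner_self_eq_norm_sq, hu]
    norm_num
  obtain ⟨b, hb⟩ := horth.exists_orthonormalBasis_extension_of_card_eq hcard
  have hb0 : b 0 = u := hb 0 rfl
  -- polar coordinates
  have hp := polar (fun x : V3 => |dot x v| * exp (-‖x‖ ^ 2))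
    (fun m : Sph => |dot (m : V3) v|) (fun r => r * exp (-r ^ 2)) (by
      intro x hx
      have hn : ‖x‖ ≠ 0 := norm_ne_zero_iff.2 hx
      simp only [dot_smul_left, abs_mul, abs_of_nonneg (by positivity : (0:ℝ) ≤ ‖x‖⁻¹),
        abs_inv, abs_norm]
      field_simp)
  rw [radial1] at hp
  -- compute the Gaussian integral via rotation
  have hrot := (b.measurePreserving_repr_symm).integral_comp
    (b.repr.symm.toHomeomorph.measurableEmbedding)
    (fun x : V3 => |dot x v| * exp (-‖x‖ ^ 2))
  have hkey : ∀ y : EuclideanSpace ℝ (Fin 3),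
      |dot (b.repr.symm y) v| * exp (-‖b.repr.symm y‖ ^ 2)
        = ‖v‖ * (|y 0| * exp (-‖y‖ ^ 2)) := by
    intro y
    have hvu : v = ‖v‖ • u := by
      rw [hu_def, smul_smul, mul_inv_cancel₀ hnv, one_smul]
    rw [b.repr.symm.norm_map]
    rw [dot_eq_inner]
    conv_lhs => rw [hvu]
    rw [real_inner_smul_right]
    have hinner : (inner ℝ (b.repr.symm y) u : ℝ) = y 0 := by
      conv_lhs => rw [← hb0, ← b.repr.symm_apply_apply (b 0)]
      rw [b.repr.symm.inner_map_map, b.repr_self]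
      simp [PiLp.inner_apply, RCLike.inner_apply, EuclideanSpace.single_apply]
    rw [hinner, abs_mul, abs_of_nonneg (norm_nonneg v)]
    ring
  simp_rw [hkey] at hrot
  rw [MeasureTheory.integral_const_mul, gauss_abs_coord] at hrot
  rw [← hrot] at hp
  linarith [hp]

lemma sph_norm (m : Sph) : ‖(m : V3)‖ = 1 := mem_sphere_zero_iff_norm.1 m.2

lemma coord_abs_le (x : V3) (i : Fin 3) : |x i| ≤ ‖x‖ := by
  calc |x i| = Real.sqrt ((x i) ^ 2) := (Real.sqrt_sq_eq_abs _).symm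
    _ ≤ Real.sqrt (∑ j, (x j) ^ 2) := Real.sqrt_le_sqrt
        (Finset.single_le_sum (f := fun j => (x j) ^ 2) (fun j _ => sq_nonneg _)
          (Finset.mem_univ i))
    _ = ‖x‖ := by rw [← norm_sq_V3, Real.sqrt_sq (norm_nonneg _)]

lemma abs_dot_le (x y : V3) : |dot x y| ≤ ‖x‖ * ‖y‖ := by
  rw [dot_eq_inner]; exact abs_real_inner_le_norm x y

lemma integrable_of_bound (f : Sph → ℝ) (hf : AEStronglyMeasurable f dOmega) (C : ℝ)
    (hC : ∀ m, |f m| ≤ C) : Integrable f dOmega :=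
  (integrable_const C).mono' hf (ae_of_all _ (by simpa [Real.norm_eq_abs] using hC))

lemma cont_coord (i : Fin 3) : Continuous (fun m : Sph => (m : V3) i) :=
  (EuclideanSpace.proj (𝕜 := ℝ) i).continuous.comp continuous_subtype_val

lemma sphBddAbove (T : Matrix (Fin 3) (Fin 3) ℝ) :
    BddAbove {x : ℝ | ∃ m n : V3, ‖m‖ = 1 ∧ ‖n‖ = 1 ∧ x = bilin T m n} := by
  refine ⟨∑ i, ∑ j, |T i j|, fun x hx => ?_⟩
  obtain ⟨m, n, hm, hn, rfl⟩ := hx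
  refine Finset.sum_le_sum fun i _ => Finset.sum_le_sum fun j _ => ?_
  calc T i j * m i * n j ≤ |T i j * m i * n j| := le_abs_self _
    _ = |T i j| * |m i| * |n j| := by rw [abs_mul, abs_mul]
    _ ≤ |T i j| * 1 * 1 := by
        have h1 : |m i| ≤ 1 := hm ▸ coord_abs_le m i
        have h2 : |n j| ≤ 1 := hn ▸ coord_abs_le n j
        exact mul_le_mul (mul_le_mul_of_nonneg_left h1 (abs_nonneg _)) h2 (abs_nonneg _)
          (by positivity)
    _ = |T i j| := by ring


/-- If the correlation function `E_T(m,n) = m · T n` admits an LHS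
(non-steering) model, then `sup_{m,n unit} m · T n ≥ (2/3) ∑ᵢⱼ Tᵢⱼ²`. -/
theorem lhs_model_implies_singular_value_bound (T : Matrix (Fin 3) (Fin 3) ℝ)
    (h : HasLHSModel (fun m n => bilin T m n)) :
    maxSingularValue T ≥ (2 / 3) * ∑ i, ∑ j, (T i j) ^ 2 := by
  obtain ⟨N, p, I, lam, hp0, hp1, hImeas, hIbd, hlam, hE⟩ := h
  set F : ℝ := ∑ i, ∑ j, (T i j) ^ 2 with hF
  -- basis vectors on the sphere
  have hej : ∀ j : Fin 3, ‖(EuclideanSpace.single j (1:ℝ) : V3)‖ = 1 := by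
    intro j; rw [EuclideanSpace.norm_single]; norm_num
  -- step 1: pointwise vector identity
  have hw : ∀ (m : Sph) (j : Fin 3),
      (∑ i, T i j * (m : V3) i) = ∑ l, p l * I l m * lam l j := by
    intro m j
    have h0 := hE m ⟨EuclideanSpace.single j (1:ℝ), by
      rw [mem_sphere_zero_iff_norm]; exact hej j⟩
    simp only [bilin, dot, EuclideanSpace.single_apply, mul_ite, mul_one, mul_zero, ite_mul,
      one_mul, zero_mul, Finset.sum_ite_eq, Finset.sum_ite_eq', Finset.mem_univ, if_true] at h0
    exact h0
  -- the vectors u l = T (lam l)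
  set u : Fin N → V3 := fun l => (WithLp.equiv 2 (Fin 3 → ℝ)).symm (fun i => ∑ j, T i j * lam l j)
    with hu_def
  have hul : ∀ l i, u l i = ∑ j, T i j * lam l j := fun l i => rfl
  -- pointwise scalar identity
  have hpt : ∀ m : Sph, (∑ j, (∑ i, T i j * (m : V3) i) ^ 2)
      = ∑ l, p l * I l m * dot (m : V3) (u l) := by
    intro m
    have h1 : ∀ j : Fin 3, (∑ i, T i j * (m : V3) i) ^ 2
        = ∑ l, p l * I l m * ((∑ i, T i j * (m : V3) i) * lam l j) := by
      intro j
      rw [sq]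
      nth_rewrite 2 [hw m j]
      rw [Finset.mul_sum]
      exact Finset.sum_congr rfl fun l _ => by ring
    simp_rw [h1]
    rw [Finset.sum_comm]
    refine Finset.sum_congr rfl fun l _ => ?_
    rw [← Finset.mul_sum]
    congr 1
    have hdot : dot (m : V3) (u l) = ∑ i, ∑ j, (m : V3) i * (T i j * lam l j) := by
      simp only [dot]
      exact Finset.sum_congr rfl fun i _ => by rw [hul, Finset.mul_sum]
    rw [hdot, Finset.sum_comm]
    refine Finset.sum_congr rfl fun j _ => ?_
    rw [Finset.sum_mul]
    exact Finset.sum_congr rfl fun i _ => by ring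
  -- integrability facts
  have int_mm : ∀ i k : Fin 3, Integrable (fun m : Sph => (m : V3) i * (m : V3) k) dOmega := by
    intro i k
    refine integrable_of_bound _ (((cont_coord i).mul (cont_coord k)).aestronglyMeasurable) 1 ?_
    intro m
    rw [abs_mul]
    have h1 := coord_abs_le (m : V3) i; have h2 := coord_abs_le (m : V3) k
    rw [sph_norm] at h1 h2
    nlinarith [abs_nonneg ((m : V3) i), abs_nonneg ((m : V3) k)]
  have cont_dot : ∀ v : V3, Continuous (fun m : Sph => dot (m : V3) v) := by
    intro v
    simp only [dot]
    exact continuous_finset_sum _ fun i _ => (cont_coord i).mul continuous_const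
  have int_absdot : ∀ v : V3, Integrable (fun m : Sph => |dot (m : V3) v|) dOmega := by
    intro v
    refine integrable_of_bound _ ((cont_dot v).abs.aestronglyMeasurable) ‖v‖ fun m => ?_
    rw [abs_abs]
    simpa [sph_norm m] using abs_dot_le (m : V3) v
  have int_g : ∀ l, Integrable (fun m : Sph => p l * I l m * dot (m : V3) (u l)) dOmega := by
    intro l
    refine integrable_of_bound _ ?_ (p l * ‖u l‖) fun m => ?_
    · exact ((measurable_const.mul (hImeas l)).mul
        (cont_dot (u l)).measurable).aestronglyMeasurable
    · rw [abs_mul, abs_mul, abs_of_nonneg (hp0 l)]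
      calc p l * |I l m| * |dot (m : V3) (u l)| ≤ p l * 1 * ‖u l‖ := by
            refine mul_le_mul (mul_le_mul_of_nonneg_left (hIbd l m) (hp0 l)) ?_ (abs_nonneg _)
              (by simpa using hp0 l)
            simpa [sph_norm m] using abs_dot_le (m : V3) (u l)
        _ = p l * ‖u l‖ := by ring
  -- integrate the identity
  have key : ∫ m : Sph, (∑ j, (∑ i, T i j * (m : V3) i) ^ 2) ∂dOmega
      = ∑ l, ∫ m : Sph, p l * I l m * dot (m : V3) (u l) ∂dOmega := by
    rw [integral_congr_ae (ae_of_all _ hpt)]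
    exact integral_finset_sum _ fun l _ => int_g l
  -- evaluate the left-hand side
  have hLHS : ∫ m : Sph, (∑ j, (∑ i, T i j * (m : V3) i) ^ 2) ∂dOmega = 4 * π / 3 * F := by
    have hexp : ∀ m : Sph, (∑ j, (∑ i, T i j * (m : V3) i) ^ 2)
        = ∑ j, ∑ i, ∑ k, (T i j * T k j) * ((m : V3) i * (m : V3) k) := by
      intro m
      refine Finset.sum_congr rfl fun j _ => ?_
      rw [sq, Finset.sum_mul_sum]
      exact Finset.sum_congr rfl fun i _ => Finset.sum_congr rfl fun k _ => by ring
    have I1 : ∀ j i : Fin 3, Integrable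
        (fun m : Sph => ∑ k, (T i j * T k j) * ((m : V3) i * (m : V3) k)) dOmega :=
      fun j i => integrable_finset_sum _ fun k _ => ((int_mm i k).const_mul _)
    have I2 : ∀ j : Fin 3, Integrable
        (fun m : Sph => ∑ i, ∑ k, (T i j * T k j) * ((m : V3) i * (m : V3) k)) dOmega :=
      fun j => integrable_finset_sum _ fun i _ => I1 j i
    rw [integral_congr_ae (ae_of_all _ hexp), integral_finset_sum _ fun j _ => I2 j]
    have hj : ∀ j : Fin 3, (∫ m : Sph, ∑ i, ∑ k, (T i j * T k j) *
          ((m : V3) i * (m : V3) k) ∂dOmega)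
        = ∑ i, ∑ k, (T i j * T k j) * ∫ m : Sph, (m : V3) i * (m : V3) k ∂dOmega := by
      intro j
      rw [integral_finset_sum _ fun i _ => I1 j i]
      refine Finset.sum_congr rfl fun i _ => ?_
      rw [integral_finset_sum _ fun k _ => (int_mm i k).const_mul _]
      exact Finset.sum_congr rfl fun k _ => MeasureTheory.integral_const_mul _ _
    simp_rw [hj, integral_sphere_mul, mul_ite, mul_zero, Finset.sum_ite_eq, Finset.mem_univ,
      if_true]
    rw [hF, Finset.sum_comm, Finset.mul_sum]
    refine Finset.sum_congr rfl fun i _ => ?_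
    rw [Finset.mul_sum]
    exact Finset.sum_congr rfl fun j _ => by ring
  -- bound each term on the right-hand side
  have hRHS : ∀ l, (∫ m : Sph, p l * I l m * dot (m : V3) (u l) ∂dOmega)
      ≤ p l * (2 * π * ‖u l‖) := by
    intro l
    have hmono : (∫ m : Sph, p l * I l m * dot (m : V3) (u l) ∂dOmega)
        ≤ ∫ m : Sph, p l * |dot (m : V3) (u l)| ∂dOmega := by
      refine integral_mono (int_g l) ((int_absdot (u l)).const_mul _) fun m => ?_
      calc p l * I l m * dot (m : V3) (u l) ≤ |p l * I l m * dot (m : V3) (u l)| := le_abs_self _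
        _ = p l * (|I l m| * |dot (m : V3) (u l)|) := by
            rw [abs_mul, abs_mul, abs_of_nonneg (hp0 l), mul_assoc]
        _ ≤ p l * (1 * |dot (m : V3) (u l)|) := by
            refine mul_le_mul_of_nonneg_left ?_ (hp0 l)
            exact mul_le_mul_of_nonneg_right (hIbd l m) (abs_nonneg _)
        _ = p l * |dot (m : V3) (u l)| := by ring
    rwa [MeasureTheory.integral_const_mul, integral_sphere_abs_dot] at hmono
  -- choose the maximizing hidden state
  have hN : (Finset.univ : Finset (Fin N)).Nonempty := by
    by_contra hc
    rw [Finset.not_nonempty_iff_eq_empty] at hc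
    rw [hc, Finset.sum_empty] at hp1
    exact one_ne_zero hp1.symm
  obtain ⟨l₀, -, hl₀⟩ := Finset.exists_max_image Finset.univ (fun l => ‖u l‖) hN
  have hchain : 4 * π / 3 * F ≤ 2 * π * ‖u l₀‖ := by
    rw [← hLHS, key]
    calc (∑ l, ∫ m : Sph, p l * I l m * dot (m : V3) (u l) ∂dOmega)
        ≤ ∑ l, p l * (2 * π * ‖u l‖) := Finset.sum_le_sum fun l _ => hRHS l
      _ ≤ ∑ l, p l * (2 * π * ‖u l₀‖) := Finset.sum_le_sum fun l _ => by
          refine mul_le_mul_of_nonneg_left ?_ (hp0 l)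
          have := hl₀ l (Finset.mem_univ l)
          nlinarith [pi_pos]
      _ = 2 * π * ‖u l₀‖ := by rw [← Finset.sum_mul, hp1, one_mul]
  have hFnn : 0 ≤ F := Finset.sum_nonneg fun i _ => Finset.sum_nonneg fun j _ => sq_nonneg _
  have hM : 2 / 3 * F ≤ ‖u l₀‖ := by nlinarith [pi_pos]
  by_cases hu0 : ‖u l₀‖ = 0
  · have hF0 : F = 0 := le_antisymm (by rw [hu0] at hM; linarith) hFnn
    have hT0 : ∀ i j, T i j = 0 := by
      intro i j
      have h1 : ∑ i, ∑ j, T i j ^ 2 = 0 := by rw [← hF]; exact hF0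
      have h2 := (Finset.sum_eq_zero_iff_of_nonneg
        fun i _ => Finset.sum_nonneg fun j _ => sq_nonneg (T i j)).1 h1 i (Finset.mem_univ i)
      have h3 := (Finset.sum_eq_zero_iff_of_nonneg
        fun j _ => sq_nonneg (T i j)).1 h2 j (Finset.mem_univ j)
      exact pow_eq_zero_iff (by norm_num) |>.1 h3
    rw [ge_iff_le, hF0, mul_zero, maxSingularValue]
    refine le_csSup (sphBddAbove T) ?_
    exact ⟨EuclideanSpace.single 0 (1:ℝ), EuclideanSpace.single 0 (1:ℝ), hej 0, hej 0,
      by simp [bilin, hT0]⟩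
  · have hmem : ‖u l₀‖ ∈ {x : ℝ | ∃ m n : V3, ‖m‖ = 1 ∧ ‖n‖ = 1 ∧ x = bilin T m n} := by
      refine ⟨‖u l₀‖⁻¹ • u l₀, lam l₀, ?_, hlam l₀, ?_⟩
      · rw [norm_smul, norm_inv, norm_norm, inv_mul_cancel₀ hu0]
      · rw [bilin]
        have hsum : ∀ i : Fin 3, (∑ j, T i j * ((‖u l₀‖⁻¹ • u l₀) i) * lam l₀ j)
            = ‖u l₀‖⁻¹ * (u l₀ i * u l₀ i) := by
          intro i
          have hsm : (‖u l₀‖⁻¹ • u l₀) i = ‖u l₀‖⁻¹ * u l₀ i := rfl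
          rw [show (∑ j, T i j * ((‖u l₀‖⁻¹ • u l₀) i) * lam l₀ j)
              = ‖u l₀‖⁻¹ * (u l₀ i * ∑ j, T i j * lam l₀ j) from by
            rw [Finset.mul_sum, Finset.mul_sum]
            exact Finset.sum_congr rfl fun j _ => by rw [hsm]; ring]
          rw [← hul]
        rw [Finset.sum_congr rfl fun i _ => hsum i, ← Finset.mul_sum]
        have hn2 : (∑ i, u l₀ i * u l₀ i) = ‖u l₀‖ ^ 2 := by
          rw [norm_sq_V3]
          exact Finset.sum_congr rfl fun i _ => (sq (u l₀ i)).symm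
        rw [hn2, sq]
        rw [← mul_assoc, inv_mul_cancel₀ hu0, one_mul]
    rw [ge_iff_le, maxSingularValue]
    exact le_trans hM (le_csSup (sphBddAbove T) hmem)

end
end
end

section
/- Let 1/2 < v ≤ 1 and let ρ_v = v|ψ⁻⟩⟨ψ⁻| + (1−v)·I₄/4 be the Werner state, with correlation function E(m,n) = Tr[((m·σ) ⊗ (n·σ)) ρ_v] for unit vectors m, n ∈ ℝ³. Then E admits no LHS (non-steering) model; i.e. the Werner state is steerable for all v > 1/2. -/
open MeasureTheory Matrix
open Kronecker

noncomputable section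

/-- The Pauli matrices `σ₀ = I₂, σ₁, σ₂, σ₃`. -/
def pauli : Fin 4 → Matrix (Fin 2) (Fin 2) ℂ :=
  ![1,
    !![0, 1; 1, 0],
    !![0, -Complex.I; Complex.I, 0],
    !![1, 0; 0, -1]]

/-- Kronecker product of two `2×2` matrices, reindexed as a `4×4` matrix
(row/column `(i,j)` of `A ⊗ B` corresponds to `2i + j`, i.e. the computational
basis ordering `|00⟩, |01⟩, |10⟩, |11⟩`). -/
def kron (A B : Matrix (Fin 2) (Fin 2) ℂ) : Matrix (Fin 4) (Fin 4) ℂ :=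
  Matrix.reindex finProdFinEquiv finProdFinEquiv (A ⊗ₖ B)

/-- `m·σ = ∑ᵢ mᵢ σᵢ` for `m ∈ ℝ³`. -/
def dotSigma (m : V3) : Matrix (Fin 2) (Fin 2) ℂ :=
  ∑ i : Fin 3, (m i : ℂ) • pauli i.succ

/-- The singlet state `|ψ⁻⟩ = (|01⟩ − |10⟩)/√2` in the computational basis of `ℂ⁴`. -/
def psiMinus : Fin 4 → ℂ :=
  ![0, ((1 / Real.sqrt 2 : ℝ) : ℂ), ((-(1 / Real.sqrt 2) : ℝ) : ℂ), 0]

/-- The Werner state `ρ_v = v |ψ⁻⟩⟨ψ⁻| + (1−v) I₄/4`. -/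
def wernerState (v : ℝ) : Matrix (Fin 4) (Fin 4) ℂ :=
  (v : ℂ) • Matrix.vecMulVec psiMinus (fun j => starRingEnd ℂ (psiMinus j)) +
    (((1 - v : ℝ) : ℂ) / 4) • (1 : Matrix (Fin 4) (Fin 4) ℂ)


open Real Set
open scoped RealInnerProductSpace

namespace WernerAux

lemma dot_eq_inner (x y : V3) : dot x y = ⟪x, y⟫ := by
  simp [dot, PiLp.inner_apply, RCLike.inner_apply, mul_comm]

lemma gauss1 : ∫ x : ℝ, Real.exp (-x ^ 2) = Real.sqrt π := by
  have h := integral_gaussian 1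
  simpa using h

lemma tendsto_exp_neg_sq :
    Filter.Tendsto (fun t : ℝ => Real.exp (-t ^ 2)) Filter.atTop (nhds 0) := by
  have := Real.tendsto_exp_neg_atTop_nhds_zero.comp (Filter.tendsto_pow_atTop (two_ne_zero))
  simpa [Function.comp_def] using this

lemma ioiHalf : ∫ x in Ioi (0:ℝ), x * Real.exp (-x ^ 2) = 1 / 2 := by
  have hderiv : ∀ x ∈ Ioi (0:ℝ), HasDerivAt (fun t : ℝ => -(Real.exp (-t ^ 2) / 2))
      (x * Real.exp (-x ^ 2)) x := by
    intro x _
    have h1 : HasDerivAt (fun t : ℝ => -t ^ 2) (-(2 * x)) x := by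
      simpa using (hasDerivAt_pow 2 x).fun_neg
    have h3 := (h1.exp.div_const 2).fun_neg
    refine h3.congr_deriv ?_
    ring
  have hcont : ContinuousWithinAt (fun t : ℝ => -(Real.exp (-t ^ 2) / 2)) (Ici 0) 0 :=
    (by fun_prop : Continuous fun t : ℝ => -(Real.exp (-t ^ 2) / 2)).continuousWithinAt
  have htend : Filter.Tendsto (fun t : ℝ => -(Real.exp (-t ^ 2) / 2)) Filter.atTop (nhds 0) := by
    have := (tendsto_exp_neg_sq.div_const 2).neg
    simpa using this
  have hpos : ∀ x ∈ Ioi (0:ℝ), 0 ≤ x * Real.exp (-x ^ 2) := fun x hx =>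
    mul_nonneg (le_of_lt hx) (Real.exp_pos _).le
  rw [integral_Ioi_of_hasDerivAt_of_nonneg hcont hderiv hpos htend]
  norm_num

lemma absGauss : ∫ x : ℝ, |x| * Real.exp (-x ^ 2) = 1 := by
  have : (fun x : ℝ => |x| * Real.exp (-x ^ 2)) =
      fun x : ℝ => (fun t : ℝ => t * Real.exp (-t ^ 2)) |x| := by
    funext x; simp [sq_abs]
  rw [this, integral_comp_abs (f := fun t : ℝ => t * Real.exp (-t ^ 2)), ioiHalf]
  norm_num

lemma cube : ∫ y in Ioi (0:ℝ), y ^ 2 • (y * Real.exp (-y ^ 2)) = 1 / 2 := by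
  have hderiv : ∀ x ∈ Ioi (0:ℝ), HasDerivAt (fun t : ℝ => -((t ^ 2 + 1) * Real.exp (-t ^ 2) / 2))
      (x ^ 2 • (x * Real.exp (-x ^ 2))) x := by
    intro x _
    have h1 : HasDerivAt (fun t : ℝ => t ^ 2 + 1) (2 * x) x := by
      simpa using (hasDerivAt_pow 2 x).add_const 1
    have h2 : HasDerivAt (fun t : ℝ => -t ^ 2) (-(2 * x)) x := by
      simpa using (hasDerivAt_pow 2 x).fun_neg
    have h3 := ((h1.mul h2.exp).div_const 2).fun_neg
    refine h3.congr_deriv ?_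
    simp only [smul_eq_mul]
    ring
  have hcont : ContinuousWithinAt
      (fun t : ℝ => -((t ^ 2 + 1) * Real.exp (-t ^ 2) / 2)) (Ici 0) 0 :=
    (by fun_prop :
      Continuous fun t : ℝ => -((t ^ 2 + 1) * Real.exp (-t ^ 2) / 2)).continuousWithinAt
  have htend : Filter.Tendsto (fun t : ℝ => -((t ^ 2 + 1) * Real.exp (-t ^ 2) / 2))
      Filter.atTop (nhds 0) := by
    have T1 : Filter.Tendsto (fun t : ℝ => t ^ 2 * Real.exp (-t ^ 2)) Filter.atTop (nhds 0) := by
      have := (Real.tendsto_pow_mul_exp_neg_atTop_nhds_zero 1).comp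
        (Filter.tendsto_pow_atTop (two_ne_zero (α := ℕ)))
      simpa [Function.comp_def] using this
    have := (((T1.add tendsto_exp_neg_sq).div_const 2).neg)
    have heq : (fun t : ℝ => -((t ^ 2 + 1) * Real.exp (-t ^ 2) / 2)) =
        fun t : ℝ => -((t ^ 2 * Real.exp (-t ^ 2) + Real.exp (-t ^ 2)) / 2) := by
      funext t; ring
    rw [heq]
    simpa using this
  have hpos : ∀ x ∈ Ioi (0:ℝ), 0 ≤ x ^ 2 • (x * Real.exp (-x ^ 2)) := fun x hx => by
    have : (0:ℝ) < x := hx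
    positivity
  rw [integral_Ioi_of_hasDerivAt_of_nonneg hcont hderiv hpos htend]
  norm_num

lemma intGauss3 : Integrable (fun x : V3 => Real.exp (-(1/2) * ‖x‖ ^ 2)) := by
  have h := (GaussianFourier.integrable_cexp_neg_mul_sq_norm_add
    (V := V3) (b := (1/2 : ℂ)) (by norm_num) 0 0).norm
  refine h.congr (Filter.Eventually.of_forall fun x => ?_)
  simp [Complex.norm_exp]
  rw [← Complex.ofReal_pow, Complex.ofReal_re]

lemma normExpBound (t : ℝ) (ht : 0 ≤ t) : t * Real.exp (-t ^ 2) ≤ Real.exp (-(1/2) * t ^ 2) := by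
  have h1 : t ≤ Real.exp (t ^ 2 / 2) := by
    have := Real.add_one_le_exp (t ^ 2 / 2)
    nlinarith [sq_nonneg (t - 1)]
  calc t * Real.exp (-t ^ 2) ≤ Real.exp (t ^ 2 / 2) * Real.exp (-t ^ 2) :=
        mul_le_mul_of_nonneg_right h1 (Real.exp_pos _).le
    _ = Real.exp (-(1/2) * t ^ 2) := by rw [← Real.exp_add]; ring_nf

lemma intA : Integrable (fun x : V3 => ‖x‖ * Real.exp (-‖x‖ ^ 2)) := by
  refine intGauss3.mono' ?_ (Filter.Eventually.of_forall fun x => ?_)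
  · exact ((by fun_prop :
      Continuous fun x : V3 => ‖x‖ * Real.exp (-‖x‖ ^ 2))).aestronglyMeasurable
  · rw [Real.norm_eq_abs, abs_of_nonneg (by positivity)]
    exact normExpBound ‖x‖ (norm_nonneg x)

lemma valA : ∫ x : V3, ‖x‖ * Real.exp (-‖x‖ ^ 2) = 2 * π := by
  have h := integral_fun_norm_addHaar (volume : Measure V3) (fun r : ℝ => r * Real.exp (-r ^ 2))
  have hdim : Module.finrank ℝ V3 = 3 := by simp [finrank_euclideanSpace]
  have hΓ : Real.Gamma ((3:ℕ) / 2 + 1) = 3 / 4 * Real.sqrt π := by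
    push_cast
    rw [show (3:ℝ)/2 + 1 = (1/2 + 1) + 1 by norm_num,
      Real.Gamma_add_one (by norm_num), Real.Gamma_add_one (by norm_num), Real.Gamma_one_half_eq]
    ring
  have hball : (volume (Metric.ball (0:V3) 1)).toReal = 4 / 3 * π := by
    rw [EuclideanSpace.volume_ball]
    have hcard : Fintype.card (Fin 3) = 3 := by simp
    rw [hcard, hΓ]
    have hs : Real.sqrt π ≠ 0 := (Real.sqrt_pos.mpr Real.pi_pos).ne'
    have : Real.sqrt π ^ 3 / (3 / 4 * Real.sqrt π) = 4 / 3 * π := by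
      rw [pow_succ, sq_sqrt Real.pi_pos.le]
      field_simp
    rw [this]
    simp [ENNReal.toReal_ofReal (by positivity : (0:ℝ) ≤ 4 / 3 * π)]
  rw [h, hdim, measureReal_def, hball, cube]
  norm_num
  ring

lemma valB3 : ∫ x : V3, |x 2| * Real.exp (-‖x‖ ^ 2) = π := by
  have hφ := (EuclideanSpace.volume_preserving_symm_measurableEquiv_toLp (Fin 3)).symm
  rw [← hφ.integral_comp' (fun x : V3 => |x 2| * Real.exp (-‖x‖ ^ 2))]
  set g : Fin 3 → ℝ → ℝ :=
    ![fun t => Real.exp (-t ^ 2), fun t => Real.exp (-t ^ 2),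
      fun t => |t| * Real.exp (-t ^ 2)] with hg
  have key : ∀ y : Fin 3 → ℝ,
      |((MeasurableEquiv.toLp 2 (Fin 3 → ℝ)).symm.symm y) 2| *
        Real.exp (-‖(MeasurableEquiv.toLp 2 (Fin 3 → ℝ)).symm.symm y‖ ^ 2) = ∏ i, g i (y i) := by
    intro y
    have hcoord : ∀ i, ((MeasurableEquiv.toLp 2 (Fin 3 → ℝ)).symm.symm y) i = y i := fun i => rfl
    have hnorm : ‖(MeasurableEquiv.toLp 2 (Fin 3 → ℝ)).symm.symm y‖ ^ 2 = ∑ i, (y i) ^ 2 := by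
      rw [EuclideanSpace.norm_eq]
      rw [Real.sq_sqrt (Finset.sum_nonneg fun i _ => by positivity)]
      simp [hcoord]
    rw [hnorm, hcoord]
    rw [Fin.sum_univ_three, Fin.prod_univ_three]
    simp only [hg, Matrix.cons_val_zero, Matrix.cons_val_one, Matrix.head_cons,
      Matrix.cons_val_two, Matrix.tail_cons]
    rw [show -(y 0 ^ 2 + y 1 ^ 2 + y 2 ^ 2) = (-(y 0)^2) + ((-(y 1)^2) + (-(y 2)^2)) by ring,
      Real.exp_add, Real.exp_add]
    ring
  simp_rw [key]
  rw [MeasureTheory.integral_fintype_prod_volume_eq_prod (𝕜 := ℝ) g, Fin.prod_univ_three]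
  simp only [hg, Matrix.cons_val_zero, Matrix.cons_val_one, Matrix.head_cons,
    Matrix.cons_val_two, Matrix.tail_cons]
  rw [gauss1, absGauss]
  rw [mul_one, Real.mul_self_sqrt Real.pi_pos.le]

lemma valB (lam : V3) (h : ‖lam‖ = 1) :
    ∫ x : V3, |dot x lam| * Real.exp (-‖x‖ ^ 2) = π := by
  set e3 : V3 := EuclideanSpace.single 2 1 with he3def
  have he3 : ‖e3‖ = 1 := by simp [he3def]
  set R := Submodule.reflection (ℝ ∙ (lam - e3))ᗮ with hRdef
  have hR : R lam = e3 := Submodule.reflection_sub (by rw [h, he3])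
  have hRR : R e3 = lam := by rw [← hR, Submodule.reflection_reflection]
  have hmp : MeasurePreserving R (volume : Measure V3) (volume : Measure V3) :=
    LinearIsometryEquiv.measurePreserving R
  rw [← hmp.integral_comp R.toHomeomorph.measurableEmbedding
      (fun z : V3 => |dot z lam| * Real.exp (-‖z‖ ^ 2))]
  have key : ∀ x : V3, |dot (R x) lam| * Real.exp (-‖R x‖ ^ 2) = |x 2| * Real.exp (-‖x‖ ^ 2) := by
    intro x
    have h1 : dot (R x) lam = x 2 := by
      rw [dot_eq_inner, ← hRR, LinearIsometryEquiv.inner_map_map, he3def,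
        EuclideanSpace.inner_single_right]
      simp
    rw [h1, R.norm_map]
  simp_rw [key]
  exact valB3

lemma dot_abs_le (x lam : V3) (h : ‖lam‖ = 1) : |dot x lam| ≤ ‖x‖ := by
  rw [dot_eq_inner]
  calc |⟪x, lam⟫| ≤ ‖x‖ * ‖lam‖ := abs_real_inner_le_norm x lam
    _ = ‖x‖ := by rw [h, mul_one]

lemma intB (lam : V3) (h : ‖lam‖ = 1) :
    Integrable (fun x : V3 => |dot x lam| * Real.exp (-‖x‖ ^ 2)) := by
  refine intA.mono' ?_ (Filter.Eventually.of_forall fun x => ?_)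
  · have hc : Continuous fun x : V3 => |dot x lam| * Real.exp (-‖x‖ ^ 2) := by
      simp only [dot_eq_inner]
      have : Continuous fun x : V3 => ⟪x, lam⟫ := continuous_id.inner continuous_const
      fun_prop
    exact hc.aestronglyMeasurable
  · rw [Real.norm_eq_abs, abs_of_nonneg (by positivity)]
    exact mul_le_mul_of_nonneg_right (dot_abs_le x lam h) (Real.exp_pos _).le

lemma dot_smul_left (c : ℝ) (x y : V3) : dot (c • x) y = c * dot x y := by
  simp [dot, Finset.mul_sum, mul_assoc]

lemma dot_self_one (x : V3) (h : ‖x‖ = 1) : dot x x = 1 := by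
  rw [dot_eq_inner, real_inner_self_eq_norm_sq, h, one_pow]

lemma E_val (v : ℝ) (m n : V3) :
    (Matrix.trace (kron (dotSigma m) (dotSigma n) * wernerState v)).re = -v * dot m n := by
  have h2 : Real.sqrt 2 * Real.sqrt 2 = 2 := Real.mul_self_sqrt (by norm_num)
  simp [Matrix.trace, kron, dotSigma, pauli, wernerState, psiMinus, dot, Matrix.mul_apply,
    Fin.sum_univ_succ, Matrix.vecMulVec, Matrix.one_apply, finProdFinEquiv,
    Fin.divNat, Fin.modNat, Fin.succ]
  ring_nf
  rw [Real.sq_sqrt (by norm_num : (0:ℝ) ≤ 2)]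
  ring

lemma noLHS_neg_dot (v : ℝ) (hv : 1 / 2 < v) :
    ¬ HasLHSModel (fun m n => -v * dot m n) := by
  rintro ⟨N, p, I, lam, hp, hpsum, hmeas, hI, hlam, hE⟩
  have hsph : ∀ m : Sph, v ≤ ∑ l, p l * |dot (↑m) (lam l)| := by
    intro m
    have hm : ‖(m : V3)‖ = 1 := mem_sphere_zero_iff_norm.mp m.2
    have h0 : -v * dot (↑m) (↑m) = ∑ l, p l * I l m * dot (↑m) (lam l) := hE m m
    rw [dot_self_one _ hm, mul_one] at h0
    have h1 : v = ∑ l, -(p l * I l m * dot (↑m) (lam l)) := by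
      rw [Finset.sum_neg_distrib, ← h0, neg_neg]
    rw [h1]
    refine Finset.sum_le_sum fun l _ => ?_
    have h2 : |p l * I l m * dot (↑m) (lam l)| ≤ p l * |dot (↑m) (lam l)| := by
      rw [abs_mul, abs_mul, abs_of_nonneg (hp l)]
      exact mul_le_mul_of_nonneg_right
        (by nlinarith [hI l m, hp l, abs_nonneg (I l m)]) (abs_nonneg _)
    exact (neg_le_abs _).trans h2
  have h1 : ∀ x : V3, v * ‖x‖ ≤ ∑ l, p l * |dot x (lam l)| := by
    intro x
    by_cases hx : x = 0
    · subst hx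
      simp only [norm_zero, mul_zero]
      exact Finset.sum_nonneg fun l _ => mul_nonneg (hp l) (abs_nonneg _)
    · have hnx : (0:ℝ) < ‖x‖ := norm_pos_iff.mpr hx
      have hmem : (‖x‖⁻¹ • x : V3) ∈ Metric.sphere (0:V3) 1 := by
        rw [mem_sphere_zero_iff_norm, norm_smul, norm_inv, norm_norm,
          inv_mul_cancel₀ hnx.ne']
      have h2 := hsph ⟨_, hmem⟩
      have h3 : ∀ l, |dot (‖x‖⁻¹ • x) (lam l)| = ‖x‖⁻¹ * |dot x (lam l)| := by
        intro l
        rw [dot_smul_left, abs_mul, abs_inv, abs_norm]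
      simp only [h3] at h2
      calc v * ‖x‖ ≤ (∑ l, p l * (‖x‖⁻¹ * |dot x (lam l)|)) * ‖x‖ :=
            mul_le_mul_of_nonneg_right h2 hnx.le
        _ = ∑ l, p l * |dot x (lam l)| := by
            rw [Finset.sum_mul]
            refine Finset.sum_congr rfl fun l _ => ?_
            field_simp
  have hFle : ∀ x : V3, v * (‖x‖ * Real.exp (-‖x‖ ^ 2)) ≤
      ∑ l, p l * (|dot x (lam l)| * Real.exp (-‖x‖ ^ 2)) := by
    intro x
    have := mul_le_mul_of_nonneg_right (h1 x) (Real.exp_pos (-‖x‖ ^ 2)).le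
    calc v * (‖x‖ * Real.exp (-‖x‖ ^ 2)) = v * ‖x‖ * Real.exp (-‖x‖ ^ 2) := by ring
      _ ≤ (∑ l, p l * |dot x (lam l)|) * Real.exp (-‖x‖ ^ 2) := this
      _ = ∑ l, p l * (|dot x (lam l)| * Real.exp (-‖x‖ ^ 2)) := by
          rw [Finset.sum_mul]; exact Finset.sum_congr rfl fun l _ => by ring
  have intF : Integrable (fun x : V3 => v * (‖x‖ * Real.exp (-‖x‖ ^ 2))) := intA.const_mul v
  have intG : Integrable (fun x : V3 =>
      ∑ l, p l * (|dot x (lam l)| * Real.exp (-‖x‖ ^ 2))) :=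
    integrable_finset_sum _ fun l _ => (intB (lam l) (hlam l)).const_mul (p l)
  have hint := integral_mono intF intG hFle
  rw [integral_const_mul, valA, integral_finset_sum _
    (fun l _ => (intB (lam l) (hlam l)).const_mul (p l))] at hint
  simp_rw [integral_const_mul] at hint
  have hRHS : ∑ l, p l * ∫ x : V3, |dot x (lam l)| * Real.exp (-‖x‖ ^ 2) = π := by
    rw [Finset.sum_congr rfl fun l _ => by rw [valB (lam l) (hlam l)], ← Finset.sum_mul, hpsum,
      one_mul]
  rw [hRHS] at hint
  nlinarith [Real.pi_pos]

end WernerAux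

/-- For `1/2 < v ≤ 1`, the correlation function
`E(m,n) = Tr[((m·σ) ⊗ (n·σ)) ρ_v]` of the Werner state admits no LHS (non-steering) model:
the Werner state is steerable for all `v > 1/2`. -/
theorem werner_state_steerable (v : ℝ) (hv : 1 / 2 < v) (hv' : v ≤ 1) :
    ¬ HasLHSModel (fun m n =>
      (Matrix.trace (kron (dotSigma m) (dotSigma n) * wernerState v)).re) := by
  intro h
  refine WernerAux.noLHS_neg_dot v hv ?_
  obtain ⟨N, p, I, lam, hp, hpsum, hmeas, hI, hlam, hE⟩ := h
  refine ⟨N, p, I, lam, hp, hpsum, hmeas, hI, hlam, fun m n => ?_⟩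
  have h0 : (Matrix.trace (kron (dotSigma ↑m) (dotSigma ↑n) * wernerState v)).re
      = ∑ l, p l * I l m * dot (↑n) (lam l) := hE m n
  show -v * dot (↑m) (↑n) = _
  rw [← WernerAux.E_val v (↑m) (↑n)]
  exact h0

end
end
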